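/- Let ℓ : ℝ^{n×m} → ℝ be μ-PL (i.e., (1/2)‖∇ℓ(W)‖_F² ≥ μ ℓ(W) for all W, assuming min ℓ = 0), and define L(W₁,W₂) = ℓ(W₁W₂ᵀ). Then at every point (W₁,W₂), the local PL inequality (1/2)‖∇L(W₁,W₂)‖_F² ≥ μ (σ_min(W₁)² + σ_min(W₂)²) · L(W₁,W₂) holds. -/

import Mathlib

open Matrix

/-- Frobenius norm of a real matrix. -/
noncomputable def fro {a b : ℕ} (A : Matrix (Fin a) (Fin b) ℝ) : ℝ :=
  Real.sqrt (∑ i, ∑ j, (A i j) ^ 2)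

/-- Frobenius (trace) inner product of two real matrices. -/
noncomputable def ip {a b : ℕ} (A B : Matrix (Fin a) (Fin b) ℝ) : ℝ :=
  ∑ i, ∑ j, A i j * B i j

/-- Square of the largest singular value of `A`: largest eigenvalue of `Aᴴ * A`. -/
noncomputable def smaxSq {a b : ℕ} (A : Matrix (Fin a) (Fin b) ℝ) : ℝ :=
  ⨆ i, (Matrix.isHermitian_conjTranspose_mul_self A).eigenvalues i

/-- Square of the smallest singular value of `A` (as the smallest eigenvalue of `Aᴴ * A`;
zero when `A` is rank-deficient as a map out of its column space). -/
noncomputable def sminSq {a b : ℕ} (A : Matrix (Fin a) (Fin b) ℝ) : ℝ :=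
  ⨅ i, (Matrix.isHermitian_conjTranspose_mul_self A).eigenvalues i

/-- Square of the largest singular value via `A * Aᴴ`. -/
noncomputable def smaxSqR {a b : ℕ} (A : Matrix (Fin a) (Fin b) ℝ) : ℝ :=
  ⨆ i, (Matrix.isHermitian_mul_conjTranspose_self A).eigenvalues i

/-- Square of the smallest singular value via `A * Aᴴ` (the `min(a,b)`-th singular value
when `a ≤ b`). -/
noncomputable def sminSqR {a b : ℕ} (A : Matrix (Fin a) (Fin b) ℝ) : ℝ :=
  ⨅ i, (Matrix.isHermitian_mul_conjTranspose_self A).eigenvalues i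

/-- Largest singular value. -/
noncomputable def smax {a b : ℕ} (A : Matrix (Fin a) (Fin b) ℝ) : ℝ :=
  Real.sqrt (smaxSq A)

lemma quad_ge' {m : ℕ} (M : Matrix (Fin m) (Fin m) ℝ) (hM : M.IsHermitian)
    (x : Fin m → ℝ) : (⨅ i, hM.eigenvalues i) * (x ⬝ᵥ x) ≤ x ⬝ᵥ (M *ᵥ x) := by
  rcases Nat.eq_zero_or_pos m with hm | hm
  · subst hm
    simp [dotProduct]
  · have : Nonempty (Fin m) := ⟨⟨0, hm⟩⟩
    set U : Matrix (Fin m) (Fin m) ℝ := (hM.eigenvectorUnitary : Matrix (Fin m) (Fin m) ℝ) with hU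
    set y : Fin m → ℝ := star U *ᵥ x with hy
    have hUU : U * star U = 1 := mem_unitaryGroup_iff.mp hM.eigenvectorUnitary.2
    have hstar : star U = Uᴴ := rfl
    have hxU : x ᵥ* U = y := by
      rw [hy, hstar, conjTranspose_eq_transpose_of_trivial, mulVec_transpose]
    have h1 : x ⬝ᵥ (M *ᵥ x) = ∑ i, hM.eigenvalues i * (y i) ^ 2 := by
      conv_lhs => rw [hM.spectral_theorem, Unitary.conjStarAlgAut_apply]
      rw [← mulVec_mulVec, ← mulVec_mulVec, dotProduct_mulVec, hxU]
      simp [dotProduct, mulVec_diagonal, Function.comp]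
      ring_nf
      congr 1; ext i; ring
    have h2 : y ⬝ᵥ y = x ⬝ᵥ x := by
      rw [hy, hstar, conjTranspose_eq_transpose_of_trivial,
        dotProduct_mulVec, vecMul_transpose, mulVec_mulVec]
      rw [show U * Uᵀ = 1 from by rw [← conjTranspose_eq_transpose_of_trivial, ← hstar, hUU],
        one_mulVec]
    rw [h1, ← h2]
    have : (⨅ i, hM.eigenvalues i) * (y ⬝ᵥ y) = ∑ i, (⨅ j, hM.eigenvalues j) * (y i * y i) := by
      rw [dotProduct, Finset.mul_sum]
    rw [this]
    apply Finset.sum_le_sum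
    intro i _
    have hle : (⨅ j, hM.eigenvalues j) ≤ hM.eigenvalues i :=
      ciInf_le (Finite.bddBelow_range _) i
    nlinarith [sq_nonneg (y i)]

lemma fro_sq' {a b : ℕ} (A : Matrix (Fin a) (Fin b) ℝ) :
    fro A ^ 2 = ∑ i, ∑ j, (A i j) ^ 2 :=
  Real.sq_sqrt (Finset.sum_nonneg fun _ _ => Finset.sum_nonneg fun _ _ => sq_nonneg _)

lemma sumsq_eq' {a b c : ℕ} (G : Matrix (Fin a) (Fin b) ℝ) (W : Matrix (Fin b) (Fin c) ℝ) :
    ∑ i, ∑ k, ((G * W) i k) ^ 2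
      = ∑ i, (fun j => G i j) ⬝ᵥ ((W * Wᴴ) *ᵥ fun j => G i j) := by
  apply Finset.sum_congr rfl
  intro i _
  simp only [mul_apply, dotProduct, mulVec, conjTranspose_apply, star_trivial, pow_two,
    Finset.sum_mul_sum, Finset.mul_sum, Finset.sum_mul]
  rw [Finset.sum_comm]
  apply Finset.sum_congr rfl; intro j _
  rw [Finset.sum_comm]
  apply Finset.sum_congr rfl; intro j' _
  apply Finset.sum_congr rfl; intro k _
  ring

lemma key_bound {a b c : ℕ} (G : Matrix (Fin a) (Fin b) ℝ) (W : Matrix (Fin b) (Fin c) ℝ) :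
    sminSqR W * fro G ^ 2 ≤ fro (G * W) ^ 2 := by
  rw [fro_sq', fro_sq', sumsq_eq', Finset.mul_sum]
  apply Finset.sum_le_sum
  intro i _
  have := quad_ge' (W * Wᴴ) (Matrix.isHermitian_mul_conjTranspose_self W) (fun j => G i j)
  have hd : (fun j => G i j) ⬝ᵥ (fun j => G i j) = ∑ j, G i j ^ 2 := by
    simp [dotProduct, pow_two]
  rw [hd] at this
  exact this

lemma sminSqR_nonneg {a b : ℕ} (A : Matrix (Fin a) (Fin b) ℝ) : 0 ≤ sminSqR A :=
  Real.iInf_nonneg fun i =>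
    (Matrix.posSemidef_self_mul_conjTranspose A).eigenvalues_nonneg i

/-- If `ℓ` is `μ`-PL with `min ℓ = 0`, then `L(W₁,W₂) = ℓ(W₁W₂ᵀ)` satisfies the local
PL inequality `(1/2)‖∇L‖_F² ≥ μ(σ_min(W₁)² + σ_min(W₂)²) L` at every point. -/
theorem stmt10 (n m h : ℕ) (μ : ℝ) (hμ : 0 < μ)
    (ℓ : Matrix (Fin n) (Fin m) ℝ → ℝ)
    (g : Matrix (Fin n) (Fin m) ℝ → Matrix (Fin n) (Fin m) ℝ)
    (hnonneg : ∀ W, 0 ≤ ℓ W)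
    (hPL : ∀ W, μ * ℓ W ≤ 1 / 2 * fro (g W) ^ 2)
    (W₁ : Matrix (Fin n) (Fin h) ℝ) (W₂ : Matrix (Fin m) (Fin h) ℝ) :
    μ * (sminSqR W₁ + sminSqR W₂) * ℓ (W₁ * W₂ᵀ)
      ≤ 1 / 2 * (fro (g (W₁ * W₂ᵀ) * W₂) ^ 2 + fro ((g (W₁ * W₂ᵀ))ᵀ * W₁) ^ 2) := by
  set G := g (W₁ * W₂ᵀ) with hG
  have hs₁ : 0 ≤ sminSqR W₁ := sminSqR_nonneg W₁
  have hs₂ : 0 ≤ sminSqR W₂ := sminSqR_nonneg W₂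
  have hb₂ : sminSqR W₂ * fro G ^ 2 ≤ fro (G * W₂) ^ 2 := key_bound G W₂
  have hb₁ : sminSqR W₁ * fro Gᵀ ^ 2 ≤ fro (Gᵀ * W₁) ^ 2 := key_bound Gᵀ W₁
  have hGT : fro Gᵀ ^ 2 = fro G ^ 2 := by
    rw [fro_sq', fro_sq', Finset.sum_comm]
    simp [transpose_apply]
  rw [hGT] at hb₁
  have hpl := hPL (W₁ * W₂ᵀ)
  have hl := hnonneg (W₁ * W₂ᵀ)

  nlinarith [hpl, hs₁, hs₂, hb₁, hb₂, mul_nonneg hs₁ hl, mul_nonneg hs₂ hl]
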